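/- For every z ∈ ℂ such that T − zI is invertible, the shifted Lanczos residual satisfies res_k(z) = ( (−1)^k · (∏_{j=1}^{k} β_j) / det(T − zI) ) · ‖b‖₂ · q. -/

import Mathlib

open Matrix MeasureTheory

/-- The Euclidean 2-norm of a complex vector. -/
noncomputable def norm2 {n : ℕ} (v : Fin n → ℂ) : ℝ :=
  Real.sqrt (∑ i, ‖v i‖ ^ 2)

/-- The Lanczos-FA error for the shifted linear system `(A - z I) x = b`. -/
noncomputable def errK {n k : ℕ} (A : Matrix (Fin n) (Fin n) ℂ) (Q : Matrix (Fin n) (Fin k) ℂ)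
    (T : Matrix (Fin k) (Fin k) ℂ) (b : Fin n → ℂ) (z : ℂ) : Fin n → ℂ :=
  (A - z • 1)⁻¹.mulVec b - (Q * (T - z • 1)⁻¹ * Qᴴ).mulVec b

/-- The Lanczos-FA residual for the shifted linear system `(A - z I) x = b`. -/
noncomputable def resK {n k : ℕ} (A : Matrix (Fin n) (Fin n) ℂ) (Q : Matrix (Fin n) (Fin k) ℂ)
    (T : Matrix (Fin k) (Fin k) ℂ) (b : Fin n → ℂ) (z : ℂ) : Fin n → ℂ :=
  b - ((A - z • 1) * (Q * (T - z • 1)⁻¹ * Qᴴ)).mulVec b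

lemma vecMulVec_mulVec' {n k : ℕ} (u : Fin n → ℂ) (w x : Fin k → ℂ) :
    (Matrix.vecMulVec u w).mulVec x = (w ⬝ᵥ x) • u := by
  ext i
  simp only [Matrix.mulVec, dotProduct, Matrix.vecMulVec_apply, Pi.smul_apply,
    smul_eq_mul, Finset.sum_mul]
  exact Finset.sum_congr rfl fun j _ => by ring

theorem lanczos_shifted_residual_formula
    {n k : ℕ} (hn : 0 < n) (hk : 0 < k)
    (A : Matrix (Fin n) (Fin n) ℂ) (hA : A.IsHermitian)
    (b : Fin n → ℂ) (hb : b ≠ 0)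
    (Q : Matrix (Fin n) (Fin k) ℂ) (hQ : Qᴴ * Q = 1)
    (hQb : Q.mulVec (Pi.single (⟨0, hk⟩ : Fin k) 1) = (norm2 b)⁻¹ • b)
    (T : Matrix (Fin k) (Fin k) ℝ) (hTsymm : T.IsSymm)
    (hTtri : ∀ i j : Fin k, (i : ℕ) + 1 < (j : ℕ) ∨ (j : ℕ) + 1 < (i : ℕ) → T i j = 0)
    (hToff : ∀ i j : Fin k, (i : ℕ) + 1 = (j : ℕ) → 0 < T i j)
    (βk : ℝ) (hβk : 0 < βk)
    (q : Fin n → ℂ) (hq : norm2 q = 1) (hQq : Qᴴ.mulVec q = 0)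
    (hAQ : A * Q = Q * T.map Complex.ofReal + (βk : ℂ) •
      Matrix.vecMulVec q (Pi.single (⟨k - 1, Nat.sub_lt hk Nat.one_pos⟩ : Fin k) 1))
    (z : ℂ) (hz : IsUnit (T.map Complex.ofReal - z • 1)) :
    resK A Q (T.map Complex.ofReal) b z =
      ((((-1 : ℂ) ^ k *
            (((∏ j : Fin k, if h : (j : ℕ) + 1 < k then T j ⟨(j : ℕ) + 1, h⟩ else βk) : ℝ) : ℂ)) /
            (T.map Complex.ofReal - z • 1).det) * (norm2 b : ℂ)) • q := by
  obtain ⟨m, rfl⟩ : ∃ m, k = m + 1 := ⟨k - 1, (Nat.succ_pred_eq_of_pos hk).symm⟩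
  have he0 : (⟨0, hk⟩ : Fin (m+1)) = 0 := rfl
  have helast : (⟨m + 1 - 1, Nat.sub_lt hk Nat.one_pos⟩ : Fin (m+1)) = Fin.last m := rfl
  rw [he0] at hQb
  rw [helast] at hAQ
  set Tc : Matrix (Fin (m+1)) (Fin (m+1)) ℂ := T.map Complex.ofReal with hTc
  set M : Matrix (Fin (m+1)) (Fin (m+1)) ℂ := Tc - z • 1 with hMdef
  have hnb : (0:ℝ) < norm2 b := by
    have hpos : 0 < ∑ i, ‖b i‖ ^ 2 := by
      obtain ⟨i, hi⟩ := Function.ne_iff.mp hb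
      exact Finset.sum_pos' (fun j _ => sq_nonneg _) ⟨i, Finset.mem_univ i, pow_pos (norm_pos_iff.mpr hi) 2⟩
    exact Real.sqrt_pos.mpr hpos
  have hnb0 : ((norm2 b : ℝ) : ℂ) ≠ 0 := by
    exact_mod_cast hnb.ne'
  have hdet : IsUnit M.det := (Matrix.isUnit_iff_isUnit_det M).mp hz
  have hdet0 : M.det ≠ 0 := hdet.ne_zero
  -- b in terms of Q
  have hb' : b = ((norm2 b : ℝ) : ℂ) • Q.mulVec (Pi.single (0 : Fin (m+1)) (1:ℂ)) := by
    rw [hQb]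
    ext i
    simp only [Pi.smul_apply, smul_eq_mul, Complex.real_smul, Complex.ofReal_inv]
    field_simp
  -- Qᴴ b
  have hQhb : Qᴴ.mulVec b = ((norm2 b : ℝ) : ℂ) • (Pi.single (0 : Fin (m+1)) (1:ℂ) : Fin (m+1) → ℂ) := by
    conv_lhs => rw [hb']
    rw [Matrix.mulVec_smul, Matrix.mulVec_mulVec, hQ, Matrix.one_mulVec]
  -- (A - zI) Q
  have h1 : (A - z • 1) * Q = Q * M + (βk : ℂ) • Matrix.vecMulVec q (Pi.single (Fin.last m) 1) := by
    rw [Matrix.sub_mul, hAQ, Matrix.smul_mul, Matrix.one_mul, hMdef, Matrix.mul_sub,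
      Matrix.mul_smul, Matrix.mul_one]
    exact add_sub_right_comm _ _ _
  -- residual as multiple of q
  have hres : resK A Q Tc b z =
      (-((βk : ℂ) * ((norm2 b : ℝ) : ℂ) * M⁻¹ (Fin.last m) 0)) • q := by
    unfold resK
    rw [← hMdef]
    have hexp : (A - z • 1) * (Q * M⁻¹ * Qᴴ) =
        Q * Qᴴ + (βk : ℂ) • (Matrix.vecMulVec q (Pi.single (Fin.last m) 1) * (M⁻¹ * Qᴴ)) := by
      calc (A - z • 1) * (Q * M⁻¹ * Qᴴ)
          = ((A - z • 1) * Q) * (M⁻¹ * Qᴴ) := by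
            rw [Matrix.mul_assoc, Matrix.mul_assoc]
        _ = (Q * M) * (M⁻¹ * Qᴴ)
              + (βk : ℂ) • (Matrix.vecMulVec q (Pi.single (Fin.last m) 1) * (M⁻¹ * Qᴴ)) := by
            rw [h1, Matrix.add_mul, Matrix.smul_mul]
        _ = Q * Qᴴ + (βk : ℂ) • (Matrix.vecMulVec q (Pi.single (Fin.last m) 1) * (M⁻¹ * Qᴴ)) := by
            rw [Matrix.mul_assoc Q M, ← Matrix.mul_assoc M, Matrix.mul_nonsing_inv _ hdet,
              Matrix.one_mul]
    rw [hexp, Matrix.add_mulVec, smul_mulVec]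
    have hQQb : (Q * Qᴴ).mulVec b = b := by
      rw [← Matrix.mulVec_mulVec, hQhb, Matrix.mulVec_smul, Matrix.mulVec_single]
      conv_rhs => rw [hb']
      congr 1
      ext i
      simp [Matrix.mulVec_single]
    have hVb : (Matrix.vecMulVec q (Pi.single (Fin.last m) 1) * (M⁻¹ * Qᴴ)).mulVec b =
        (((norm2 b : ℝ) : ℂ) * M⁻¹ (Fin.last m) 0) • q := by
      rw [← Matrix.mulVec_mulVec, ← Matrix.mulVec_mulVec, hQhb, Matrix.mulVec_smul,
        Matrix.mulVec_single, vecMulVec_mulVec']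
      congr 1
      simp [dotProduct, Pi.single_apply]
    rw [hQQb, hVb]
    rw [smul_smul, sub_add_cancel_left, ← neg_smul]
    ring_nf
  -- inverse entry via adjugate
  have hinv : M⁻¹ (Fin.last m) 0 =
      Ring.inverse M.det * (M.updateRow 0 (Pi.single (Fin.last m) (1:ℂ))).det := by
    rw [Matrix.inv_def, Matrix.smul_apply, Matrix.adjugate_apply, smul_eq_mul]
  set N := M.updateRow 0 (Pi.single (Fin.last m) (1:ℂ)) with hNdef
  have hMentry : ∀ (i j : Fin (m+1)), i ≠ j → M i j = ((T i j : ℝ) : ℂ) := by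
    intro i j hij
    simp [hMdef, hTc, Matrix.sub_apply, Matrix.smul_apply, Matrix.one_apply_ne hij,
      Matrix.map_apply]
  have hσval : ∀ i : Fin (m+1), (i:ℕ) < m → ((finRotate (m+1) i : Fin (m+1)) : ℕ) = (i:ℕ) + 1 := by
    intro i hi
    rw [finRotate_succ_apply, Fin.val_add_one_of_lt]
    exact Fin.lt_def.mpr (by simpa using hi)
  have htri : (N.submatrix (finRotate (m+1)) id).BlockTriangular id := by
    intro i j hij
    simp only [id] at hij
    rw [Matrix.submatrix_apply, id]
    by_cases hi : i = Fin.last m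
    · subst hi
      rw [finRotate_last, hNdef, Matrix.updateRow_self]
      exact Pi.single_eq_of_ne (ne_of_lt hij) _
    · have hi' : (i:ℕ) < m := Fin.val_lt_last hi
      have hv := hσval i hi'
      have hij' : (j:ℕ) < (i:ℕ) := Fin.lt_def.mp hij
      have hne0 : finRotate (m+1) i ≠ 0 := by
        intro h; rw [h] at hv; simp at hv
      have hnej : finRotate (m+1) i ≠ j := by
        intro h; rw [h] at hv; omega
      rw [hNdef, Matrix.updateRow_ne hne0, hMentry _ _ hnej,
        hTtri _ _ (Or.inr (by omega)), Complex.ofReal_zero]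
  have hdiagL : (N.submatrix (finRotate (m+1)) id) (Fin.last m) (Fin.last m) = 1 := by
    rw [Matrix.submatrix_apply, finRotate_last, hNdef, Matrix.updateRow_self, id]
    exact Pi.single_eq_same _ _
  have hdiagC : ∀ i : Fin m, (N.submatrix (finRotate (m+1)) id) i.castSucc i.castSucc
      = ((T i.succ i.castSucc : ℝ) : ℂ) := by
    intro i
    have hv := hσval i.castSucc (by simp)
    have hσ : finRotate (m+1) i.castSucc = i.succ := Fin.ext (by simp [hv])
    rw [Matrix.submatrix_apply, hσ, id, hNdef,
      Matrix.updateRow_ne (Fin.succ_ne_zero i),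
      hMentry _ _ (Fin.castSucc_lt_succ : i.castSucc < i.succ).ne']
  have hNdet : N.det = (-1:ℂ)^m * ∏ i : Fin m, ((T i.succ i.castSucc : ℝ) : ℂ) := by
    have hperm := Matrix.det_permute (finRotate (m+1)) N
    rw [Matrix.det_of_upperTriangular htri, sign_finRotate,
      Fin.prod_univ_castSucc, hdiagL, mul_one] at hperm
    rw [Finset.prod_congr rfl fun i _ => hdiagC i] at hperm
    have hcast : (((((-1:ℤˣ))^m : ℤˣ) : ℤ) : ℂ) = (-1:ℂ)^m := by push_cast; ring
    rw [Nat.add_sub_cancel] at hperm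
    rw [hcast] at hperm
    have hc : ((-1:ℂ)^m) * ((-1:ℂ)^m) = 1 := by
      rw [← pow_add]; exact Even.neg_one_pow ⟨m, rfl⟩
    calc N.det = (((-1:ℂ)^m) * ((-1:ℂ)^m)) * N.det := by rw [hc, one_mul]
      _ = (-1:ℂ)^m * ((-1:ℂ)^m * N.det) := by ring
      _ = (-1:ℂ)^m * ∏ i : Fin m, ((T i.succ i.castSucc : ℝ) : ℂ) := by rw [← hperm]
  have hP : (∏ j : Fin (m+1), if h : (j:ℕ)+1 < m+1 then T j ⟨(j:ℕ)+1, h⟩ else βk)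
      = (∏ i : Fin m, T i.succ i.castSucc) * βk := by
    rw [Fin.prod_univ_castSucc]
    congr 1
    · refine Finset.prod_congr rfl fun i _ => ?_
      have h : ((i.castSucc : Fin (m+1)) : ℕ) + 1 < m + 1 := by
        simp [Nat.succ_lt_succ i.isLt]
      rw [dif_pos h]
      have he : (⟨((i.castSucc : Fin (m+1)) : ℕ) + 1, h⟩ : Fin (m+1)) = i.succ :=
        Fin.ext (by simp)
      rw [he]
      exact hTsymm.apply i.succ i.castSucc
    · rw [dif_neg (by simp)]
  rw [hres, hinv, hNdet, hP, Ring.inverse_eq_inv']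
  congr 1
  push_cast
  field_simp
  ring
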